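/- For any graph G on n vertices, X_G = Σ_{A ⊆ E(G)} (−1)^{|A|} p_{π(A)}, where π(A) is the partition of n whose parts are the orders of the connected components of the spanning subgraph (V(G), A). -/

import Mathlib

open SimpleGraph

/-- Proper coloring for an edge set over `Sym2 V` (loops allowed): adjacent (or equal, for a
loop) endpoints must receive different colors. -/
def ProperCol {V : Type*} (E : Set (Sym2 V)) (k : V -> Nat) : Prop :=
  forall u v : V, s(u, v) ∈ E -> k u ≠ k v

/-- Weighted chromatic symmetric function `X_{(G,w)}` as a formal power series in the
variables `x_0, x_1, …` : the coefficient of a monomial `d` is the number of proper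
colorings whose total weight in color `i` is `d i` for every `i`. -/
noncomputable def csfW {V : Type*} (E : Set (Sym2 V)) (w : V -> Nat) : MvPowerSeries Nat Int :=
  fun d => (Nat.card {k : V -> Nat |
    ProperCol E k ∧ forall i : Nat, (∑ᶠ v ∈ {v : V | k v = i}, w v) = d i} : Int)

/-- Chromatic symmetric function `X_G` of a simple graph. -/
noncomputable def csf {V : Type*} (G : SimpleGraph V) : MvPowerSeries Nat Int :=
  csfW G.edgeSet (fun _ => 1)

/-- The power-sum symmetric function `p_k = Σ_i x_i ^ k`. -/
noncomputable def psum (k : Nat) : MvPowerSeries Nat Int :=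
  open scoped Classical in
  fun d => if ∃ i : Nat, d = Finsupp.single i k then 1 else 0

/-- `p_lam` for a multiset of parts `lam`. -/
noncomputable def pProd (m : Multiset Nat) : MvPowerSeries Nat Int :=
  (m.map psum).prod

/-- The multiset of the total `w`-weights of the vertex sets of the connected components
of `G`; with `w = 1` this is the partition `π(A)` of the orders of the components. -/
noncomputable def piW {V : Type*} [Finite V] (G : SimpleGraph V) (w : V -> Nat) : Multiset Nat :=
  letI : Fintype G.ConnectedComponent := Fintype.ofFinite _
  (Finset.univ : Finset G.ConnectedComponent).val.map fun c => ∑ᶠ v ∈ c.supp, w v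

open Finset

open scoped Classical in
lemma coeff_psum (n : ℕ) (e : ℕ →₀ ℕ) :
    MvPowerSeries.coeff e (psum n) = if ∃ i : ℕ, e = Finsupp.single i n then 1 else 0 := by
  rw [MvPowerSeries.coeff_apply]
  simp [psum]

section
variable {V : Type*} [Fintype V] [DecidableEq V]

open scoped Classical

/-- finsum of ones over a fiber is the cardinality of the fiber. -/
lemma finsum_fiber (k : V → ℕ) (i : ℕ) :
    (∑ᶠ v ∈ {v : V | k v = i}, (1 : ℕ)) = (Finset.univ.filter fun v => k v = i).card := by
  have h : {v : V | k v = i} = ↑(Finset.univ.filter fun v => k v = i) := by ext v; simp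
  rw [h, finsum_mem_coe_finset]
  simp

/-- The finset of colorings with prescribed fiber sizes `d`. -/
noncomputable def Fd (d : ℕ →₀ ℕ) : Finset (V → ℕ) :=
  (Fintype.piFinset fun _ : V => d.support).filter
    (fun k => ∀ i, (Finset.univ.filter fun v => k v = i).card = d i)

lemma mem_Fd {d : ℕ →₀ ℕ} {k : V → ℕ} :
    k ∈ Fd d ↔ ∀ i, (Finset.univ.filter fun v => k v = i).card = d i := by
  constructor
  · exact fun h => (Finset.mem_filter.mp h).2
  · intro h
    refine Finset.mem_filter.mpr ⟨Fintype.mem_piFinset.mpr fun v => ?_, h⟩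
    rw [Finsupp.mem_support_iff, ← h (k v)]
    exact Finset.card_ne_zero_of_mem (Finset.mem_filter.mpr ⟨Finset.mem_univ v, rfl⟩)

lemma csfW_coeff (E : Set (Sym2 V)) (d : ℕ →₀ ℕ) :
    MvPowerSeries.coeff d (csfW E fun _ => 1)
      = (((Fd d).filter fun k => ProperCol E k).card : ℤ) := by
  rw [MvPowerSeries.coeff_apply]
  show ((Nat.card {k : V → ℕ | ProperCol E k ∧
      ∀ i : ℕ, (∑ᶠ v ∈ {v : V | k v = i}, (1:ℕ)) = d i} : ℕ) : ℤ) = _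
  have hset : {k : V → ℕ | ProperCol E k ∧
      ∀ i : ℕ, (∑ᶠ v ∈ {v : V | k v = i}, (1:ℕ)) = d i}
      = ↑((Fd d).filter fun k => ProperCol E k) := by
    ext k
    constructor
    · rintro ⟨h1, h2⟩
      refine Finset.mem_coe.mpr (Finset.mem_filter.mpr ⟨mem_Fd.mpr fun i => ?_, h1⟩)
      rw [← finsum_fiber]; exact h2 i
    · intro hk
      obtain ⟨h1, h2⟩ := Finset.mem_filter.mp (Finset.mem_coe.mp hk)
      exact ⟨h2, fun i => (finsum_fiber k i).trans (mem_Fd.mp h1 i)⟩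
  rw [hset, Nat.card_coe_set_eq, Set.ncard_coe_finset]

variable (H : SimpleGraph V)

lemma const_of_reachable {k : V → ℕ} (hk : ∀ u v, H.Adj u v → k u = k v)
    {v w : V} (h : H.Reachable v w) : k v = k w := by
  obtain ⟨p⟩ := h
  induction p with
  | nil => rfl
  | cons ha _ ih => exact (hk _ _ ha).trans ih

/-- The size of a connected component. -/
noncomputable def nn (c : H.ConnectedComponent) : ℕ :=
  (Finset.univ.filter fun v => H.connectedComponentMk v = c).card

lemma nn_ne_zero (c : H.ConnectedComponent) : nn H c ≠ 0 := by
  obtain ⟨v, rfl⟩ := Quot.exists_rep c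
  exact Finset.card_ne_zero_of_mem (Finset.mem_filter.mpr ⟨Finset.mem_univ v, rfl⟩)

/-- A representative of a connected component. -/
noncomputable def rep (c : H.ConnectedComponent) : V :=
  Classical.choose (Quot.exists_rep c)

lemma mk_rep (c : H.ConnectedComponent) : H.connectedComponentMk (rep H c) = c :=
  Classical.choose_spec (Quot.exists_rep c)

/-- The color of a component under a coloring (via the chosen representative). -/
noncomputable def compColor (k : V → ℕ) (c : H.ConnectedComponent) : ℕ := k (rep H c)

lemma compColor_mk {k : V → ℕ} (hk : ∀ u v, H.Adj u v → k u = k v) (v : V) :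
    compColor H k (H.connectedComponentMk v) = k v :=
  const_of_reachable H hk (ConnectedComponent.exact (mk_rep H _))

lemma fiber_card [Fintype H.ConnectedComponent] (f : H.ConnectedComponent → ℕ) (i : ℕ) :
    (∑ c ∈ (Finset.univ : Finset H.ConnectedComponent), (Finsupp.single (f c) (nn H c)) i)
      = (Finset.univ.filter fun v => f (H.connectedComponentMk v) = i).card := by
  rw [Finset.card_eq_sum_card_fiberwise
    (f := fun v => H.connectedComponentMk v) (t := Finset.univ) (fun v _ => Finset.mem_univ _)]
  refine Finset.sum_congr rfl fun c _ => ?_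
  rw [Finsupp.single_apply, Finset.filter_filter]
  by_cases h : f c = i
  · rw [if_pos h]
    unfold nn
    congr 1
    ext v
    simp only [Finset.mem_filter, Finset.mem_univ, true_and]
    exact ⟨fun hv => ⟨by rw [hv, h], hv⟩, fun hv => hv.2⟩
  · rw [if_neg h]
    symm
    rw [Finset.card_eq_zero, Finset.filter_eq_empty_iff]
    rintro v - ⟨h1, h2⟩
    exact h (h2 ▸ h1)

/-- `ell H k` : the finitely supported function recording, for each component, the
`Finsupp.single` of its color and its size. -/
noncomputable def ell (k : V → ℕ) : H.ConnectedComponent →₀ (ℕ →₀ ℕ) :=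
  letI : Fintype H.ConnectedComponent := Fintype.ofFinite _
  Finsupp.equivFunOnFinite.symm fun c => Finsupp.single (compColor H k c) (nn H c)

lemma ell_apply (k : V → ℕ) (c : H.ConnectedComponent) :
    ell H k c = Finsupp.single (compColor H k c) (nn H c) := rfl

lemma key_count [Fintype H.ConnectedComponent] (d : ℕ →₀ ℕ) :
    MvPowerSeries.coeff d
        (∏ c ∈ (Finset.univ : Finset H.ConnectedComponent), psum (nn H c))
      = (((Fd d).filter fun k => ∀ u v, H.Adj u v → k u = k v).card : ℤ) := by
  classical
  rw [MvPowerSeries.coeff_prod]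
  have h1 : ∀ l : H.ConnectedComponent →₀ (ℕ →₀ ℕ),
      (∏ c ∈ (Finset.univ : Finset H.ConnectedComponent),
          MvPowerSeries.coeff (l c) (psum (nn H c)))
        = if (∀ c ∈ (Finset.univ : Finset H.ConnectedComponent),
            ∃ i, l c = Finsupp.single i (nn H c)) then (1:ℤ) else 0 := by
    intro l
    simp only [coeff_psum]
    rw [Finset.prod_boole]
    congr 1
  rw [Finset.sum_congr rfl fun l _ => h1 l, Finset.sum_boole]
  congr 1
  symm
  refine Finset.card_bij (fun k _ => ell H k) ?_ ?_ ?_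
  · -- maps into the antidiagonal filter
    rintro k hk
    obtain ⟨hk1, hk2⟩ := Finset.mem_filter.mp hk
    refine Finset.mem_filter.mpr ⟨Finset.mem_finsuppAntidiag.mpr ⟨?_, fun c _ => Finset.mem_univ c⟩,
      fun c _ => ⟨compColor H k c, rfl⟩⟩
    ext i
    rw [Finsupp.finset_sum_apply]
    have : ∀ c ∈ (Finset.univ : Finset H.ConnectedComponent),
        (ell H k c) i = (Finsupp.single (compColor H k c) (nn H c)) i := fun c _ => rfl
    rw [Finset.sum_congr rfl this, fiber_card]
    rw [← mem_Fd.mp hk1 i]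
    congr 1
    ext v
    simp only [Finset.mem_filter, Finset.mem_univ, true_and]
    rw [compColor_mk H hk2]
  · -- injective
    intro k1 hk1 k2 hk2 heq
    obtain ⟨-, hm1⟩ := Finset.mem_filter.mp hk1
    obtain ⟨-, hm2⟩ := Finset.mem_filter.mp hk2
    funext v
    have h := congrArg (fun l => l (H.connectedComponentMk v)) heq
    simp only [ell_apply] at h
    have := (Finsupp.single_left_inj (nn_ne_zero H _)).mp h
    rwa [compColor_mk H hm1, compColor_mk H hm2] at this
  · -- surjective
    intro l hl
    obtain ⟨hl1, hl2⟩ := Finset.mem_filter.mp hl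
    obtain ⟨hsum, -⟩ := Finset.mem_finsuppAntidiag.mp hl1
    set f : H.ConnectedComponent → ℕ := fun c => Classical.choose (hl2 c (Finset.mem_univ c))
      with hf
    have hfc : ∀ c, l c = Finsupp.single (f c) (nn H c) :=
      fun c => Classical.choose_spec (hl2 c (Finset.mem_univ c))
    set k : V → ℕ := fun v => f (H.connectedComponentMk v) with hkdef
    have hmono : ∀ u v, H.Adj u v → k u = k v := by
      intro u v huv
      simp only [hkdef]
      rw [ConnectedComponent.connectedComponentMk_eq_of_adj huv]
    refine ⟨k, Finset.mem_filter.mpr ⟨mem_Fd.mpr fun i => ?_, hmono⟩, ?_⟩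
    · have := fiber_card H f i
      have h2 : (Finset.univ.filter fun v => k v = i)
          = (Finset.univ.filter fun v => f (H.connectedComponentMk v) = i) := rfl
      rw [h2, ← this]
      have h3 : ∀ c ∈ (Finset.univ : Finset H.ConnectedComponent),
          (Finsupp.single (f c) (nn H c)) i = l c i := fun c _ => by rw [← hfc c]
      rw [Finset.sum_congr rfl h3, ← Finsupp.finset_sum_apply, hsum]
    · ext c
      rw [ell_apply, hfc c]
      congr 1
      have : compColor H k c = f (H.connectedComponentMk (rep H c)) := rfl
      rw [this, mk_rep]


lemma piW_eq [Fintype H.ConnectedComponent] :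
    piW H (fun _ => 1) = (Finset.univ : Finset H.ConnectedComponent).val.map (nn H) := by
  have hsupp : ∀ c : H.ConnectedComponent, (∑ᶠ v ∈ c.supp, (1:ℕ)) = nn H c := by
    intro c
    have h : c.supp = ↑(Finset.univ.filter fun v => H.connectedComponentMk v = c) := by
      ext v
      simp [ConnectedComponent.mem_supp_iff]
    rw [h, finsum_mem_coe_finset]
    simp [nn]
  have h : ∀ (i1 i2 : Fintype H.ConnectedComponent),
      ((@Finset.univ _ i1).val.map fun c => ∑ᶠ v ∈ c.supp, (1:ℕ))
        = (@Finset.univ _ i2).val.map (nn H) := by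
    intro i1 i2
    cases Subsingleton.elim i1 i2
    exact Multiset.map_congr rfl fun c _ => hsupp c
  unfold piW
  exact h _ _

lemma pProd_piW [Fintype H.ConnectedComponent] :
    pProd (piW H fun _ => 1)
      = ∏ c ∈ (Finset.univ : Finset H.ConnectedComponent), psum (nn H c) := by
  rw [piW_eq]
  unfold pProd
  rw [Multiset.map_map]
  rfl

/-- `e` is a monochromatic pair under `k`. -/
def monoP (k : V → ℕ) : Sym2 V → Prop :=
  Sym2.lift ⟨fun u v => k u = k v, fun u v => propext ⟨Eq.symm, Eq.symm⟩⟩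

lemma monoP_mk (k : V → ℕ) (u v : V) : monoP k s(u, v) ↔ k u = k v := Iff.rfl

/-- The monochromatic edges of `G` under `k`. -/
noncomputable def monoE (G : SimpleGraph V) [DecidableRel G.Adj] (k : V → ℕ) :
    Finset (Sym2 V) :=
  G.edgeFinset.filter (monoP k)

lemma subset_monoE_iff {G : SimpleGraph V} [DecidableRel G.Adj] {A : Finset (Sym2 V)}
    (hA : A ⊆ G.edgeFinset) (k : V → ℕ) :
    (∀ u v, s(u, v) ∈ (A : Set (Sym2 V)) → k u = k v) ↔ A ⊆ monoE G k := by
  constructor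
  · intro h e he
    refine Finset.mem_filter.mpr ⟨hA he, ?_⟩
    induction e with
    | _ u v => exact (monoP_mk k u v).mpr (h u v he)
  · intro h u v huv
    exact (monoP_mk k u v).mp (Finset.mem_filter.mp (h huv)).2

lemma monoE_empty_iff {G : SimpleGraph V} [DecidableRel G.Adj] (k : V → ℕ) :
    monoE G k = ∅ ↔ ProperCol G.edgeSet k := by
  unfold monoE
  rw [Finset.filter_eq_empty_iff]
  constructor
  · intro h u v huv
    exact fun hc => h (mem_edgeFinset.mpr huv) ((monoP_mk k u v).mpr hc)
  · intro h e he
    induction e with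
    | _ u v => exact fun hc => h u v (mem_edgeFinset.mp he) ((monoP_mk k u v).mp hc)

lemma powerset_filter_subset {α : Type*} [DecidableEq α] {s t : Finset α} (h : t ⊆ s) :
    s.powerset.filter (· ⊆ t) = t.powerset := by
  ext a
  simp only [Finset.mem_filter, Finset.mem_powerset]
  exact ⟨fun ha => ha.2, fun ha => ⟨ha.trans h, ha⟩⟩

end


/-- Stanley's power-sum expansion
`X_G = Σ_{A ⊆ E(G)} (-1)^(|A|) p_{π(A)}`. -/
theorem stmt2 {V : Type*} [Fintype V] [DecidableEq V] (G : SimpleGraph V)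
    [DecidableRel G.Adj] :
    csf G = ∑ A ∈ G.edgeFinset.powerset,
      (-1 : MvPowerSeries Nat Int) ^ A.card *
        pProd (piW (SimpleGraph.fromEdgeSet (A : Set (Sym2 V))) (fun _ => 1)) := by
  classical
  refine MvPowerSeries.ext fun d => ?_
  rw [show csf G = csfW G.edgeSet (fun _ => 1) from rfl, csfW_coeff, map_sum]
  have hterm : ∀ A ∈ G.edgeFinset.powerset,
      MvPowerSeries.coeff d ((-1 : MvPowerSeries ℕ ℤ) ^ A.card *
          pProd (piW (fromEdgeSet (A : Set (Sym2 V))) fun _ => 1))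
        = (-1 : ℤ) ^ A.card *
          (((Fd d).filter fun k => ∀ u v, s(u,v) ∈ (A : Set (Sym2 V)) → k u = k v).card : ℤ) := by
    intro A hA
    letI : Fintype (fromEdgeSet (A : Set (Sym2 V))).ConnectedComponent := Fintype.ofFinite _
    have hC : ((-1 : MvPowerSeries ℕ ℤ) ^ A.card) = MvPowerSeries.C (σ := ℕ) (R := ℤ) ((-1) ^ A.card) := by
      rw [map_pow, map_neg, map_one]
    rw [hC, MvPowerSeries.coeff_C_mul, pProd_piW, key_count]
    have hiff : ∀ k : V → ℕ,
        (∀ u v, (fromEdgeSet (A : Set (Sym2 V))).Adj u v → k u = k v)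
          ↔ (∀ u v, s(u,v) ∈ (A : Set (Sym2 V)) → k u = k v) := by
      intro k
      constructor
      · intro h u v huv
        by_cases he : u = v
        · rw [he]
        · exact h u v ((fromEdgeSet_adj _).mpr ⟨huv, he⟩)
      · intro h u v huv
        exact h u v ((fromEdgeSet_adj _).mp huv).1
    simp only [hiff]
  rw [Finset.sum_congr rfl hterm]
  have hA2 : ∀ A ∈ G.edgeFinset.powerset,
      (-1 : ℤ) ^ A.card *
          (((Fd d).filter fun k => ∀ u v, s(u,v) ∈ (A : Set (Sym2 V)) → k u = k v).card : ℤ)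
        = ∑ k ∈ Fd d,
            if (∀ u v, s(u,v) ∈ (A : Set (Sym2 V)) → k u = k v) then (-1 : ℤ) ^ A.card else 0 := by
    intro A hA
    rw [← Finset.sum_boole, Finset.mul_sum]
    refine Finset.sum_congr rfl fun k _ => ?_
    rw [mul_ite, mul_one, mul_zero]
  rw [Finset.sum_congr rfl hA2, Finset.sum_comm]
  have hk : ∀ k ∈ Fd (V := V) d,
      (∑ A ∈ G.edgeFinset.powerset,
          if (∀ u v, s(u,v) ∈ (A : Set (Sym2 V)) → k u = k v) then (-1 : ℤ) ^ A.card else 0)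
        = if ProperCol G.edgeSet k then 1 else 0 := by
    intro k _
    have h1 : ∀ A ∈ G.edgeFinset.powerset,
        (if (∀ u v, s(u,v) ∈ (A : Set (Sym2 V)) → k u = k v) then (-1 : ℤ) ^ A.card else 0)
          = if A ⊆ monoE G k then (-1 : ℤ) ^ A.card else 0 := by
      intro A hA
      rw [if_congr (subset_monoE_iff (Finset.mem_powerset.mp hA) k) rfl rfl]
    rw [Finset.sum_congr rfl h1, ← Finset.sum_filter,
      powerset_filter_subset (show monoE G k ⊆ G.edgeFinset from Finset.filter_subset _ _), Finset.sum_powerset_neg_one_pow_card,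
      if_congr (monoE_empty_iff k) rfl rfl]
  rw [Finset.sum_congr rfl hk, Finset.sum_boole]
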